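/- Let R = ⊕_{i=1}^t R_i be a direct sum of subrings R_i with units e_i (so e_1,…,e_t are orthogonal idempotents summing to 1), and let N be an R-module. Then N = ⊕_{i=1}^t e_i N as R-modules, and e_i N is annihilated by R_j for all j ≠ i. If moreover N is an R-brace, then each N_i = e_i N is a left R-ideal of N; and the N_i are all ideals of N if and only if N ≅ N_1 × ⋯ × N_t as braces. -/
import Mathlib


/-- A (left) brace structure on an abelian group `N`. -/
structure BraceStruct (N : Type*) [AddCommGroup N] where
  circ : N → N → N
  cinv : N → N
  circ_assoc : ∀ x y z, circ (circ x y) z = circ x (circ y z)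
  zero_circ : ∀ x, circ 0 x = x
  circ_zero : ∀ x, circ x 0 = x
  cinv_circ : ∀ x, circ (cinv x) x = 0
  circ_cinv : ∀ x, circ x (cinv x) = 0
  brace : ∀ x y z, circ x (y + z) = circ x y - x + circ x z

/-- The gamma function of a brace: γ_x(y) = -x + x∘y. -/
def BraceStruct.gamma {N : Type*} [AddCommGroup N] (B : BraceStruct N)
    (x y : N) : N := -x + B.circ x y

/-- A brace whose additive group is an `R`-module is an `R`-brace when every
γ_x is an `R`-module automorphism (equivalently, is `R`-linear). -/
def BraceStruct.IsRBrace (R : Type*) {N : Type*} [Ring R] [AddCommGroup N]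
    [Module R N] (B : BraceStruct N) : Prop :=
  ∀ (x : N) (r : R) (y : N), B.gamma x (r • y) = r • B.gamma x y

namespace BraceAux
variable {N : Type*} [AddCommGroup N] (B : BraceStruct N)

lemma gamma_def (x y : N) : B.gamma x y = -x + B.circ x y := rfl

lemma circ_eq_gamma (x y : N) : B.circ x y = x + B.gamma x y := by
  rw [gamma_def]; abel

lemma gamma_zero (x : N) : B.gamma x 0 = 0 := by
  rw [gamma_def, B.circ_zero]; abel

lemma zero_gamma (y : N) : B.gamma 0 y = y := by
  rw [gamma_def, B.zero_circ]; abel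

lemma gamma_add (x y z : N) : B.gamma x (y + z) = B.gamma x y + B.gamma x z := by
  rw [gamma_def, B.brace, gamma_def, gamma_def]; abel

def gammaHom (g : N) : N →+ N where
  toFun := B.gamma g
  map_zero' := gamma_zero B g
  map_add' := gamma_add B g

lemma gamma_sub (x y z : N) : B.gamma x (y - z) = B.gamma x y - B.gamma x z :=
  map_sub (gammaHom B x) y z

lemma gamma_circ (x y z : N) :
    B.gamma (B.circ x y) z = B.gamma x (B.gamma y z) := by
  rw [gamma_def, B.circ_assoc, circ_eq_gamma B y z, B.brace,
      circ_eq_gamma B x (B.gamma y z), gamma_def]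
  abel

lemma gamma_cinv (x : N) : B.gamma x (B.cinv x) = -x := by
  rw [gamma_def, B.circ_cinv]; abel

lemma cinv_cinv (x : N) : B.cinv (B.cinv x) = x := by
  calc B.cinv (B.cinv x) = B.circ (B.cinv (B.cinv x)) 0 := (B.circ_zero _).symm
    _ = B.circ (B.cinv (B.cinv x)) (B.circ (B.cinv x) x) := by rw [B.cinv_circ]
    _ = B.circ (B.circ (B.cinv (B.cinv x)) (B.cinv x)) x := (B.circ_assoc _ _ _).symm
    _ = B.circ 0 x := by rw [B.cinv_circ]
    _ = x := B.zero_circ x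

lemma gamma_left_inv (g y : N) : B.gamma (B.cinv g) (B.gamma g y) = y := by
  rw [← gamma_circ, B.cinv_circ, zero_gamma]

lemma gamma_right_inv (g y : N) : B.gamma g (B.gamma (B.cinv g) y) = y := by
  rw [← gamma_circ, B.circ_cinv, zero_gamma]

lemma gamma_injective (g : N) : Function.Injective (B.gamma g) :=
  fun a b h => by
    have h2 := congrArg (B.gamma (B.cinv g)) h
    rw [gamma_left_inv, gamma_left_inv] at h2
    exact h2

lemma conj_formula (g x : N) :
    B.circ (B.circ g x) (B.cinv g)
      = g + B.gamma g x + B.gamma g (B.gamma x (B.cinv g)) := by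
  rw [circ_eq_gamma B (B.circ g x) (B.cinv g), gamma_circ, circ_eq_gamma B g x]


section Steps
variable {R N : Type*} [CommRing R] [AddCommGroup N] [Module R N]
variable {t : ℕ} {e : Fin t → R}
variable (B : BraceStruct N)

lemma sum_e_smul (hone : ∑ i, e i = 1) (n : N) : ∑ i, e i • n = n := by
  rw [← Finset.sum_smul, hone, one_smul]

lemma smul_e_gamma (hB : B.IsRBrace R) (g : N) (r : R) (y : N) :
    r • B.gamma g y = B.gamma g (r • y) := (hB g r y).symm

/-- Step A: if each `N_j` is closed under circ-conjugation, then elements of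
`N_j` gamma-fix elements killed by `e j`. -/
lemma stepA (hB : B.IsRBrace R) (hidem : ∀ i, e i * e i = e i)
    (HL : ∀ (i : Fin t) (g x : N), (∃ m : N, x = e i • m) →
        ∃ m : N, B.circ (B.circ g x) (B.cinv g) = e i • m)
    (j : Fin t) (z : N) (hz : e j • z = z) (v : N) (hv : e j • v = 0) :
    B.gamma z v = v := by
  set w := B.cinv v with hwdef
  have hcw : B.cinv w = v := cinv_cinv B v
  -- e j • w = 0
  have hw : e j • w = 0 := by
    apply gamma_injective B v
    rw [hB, hwdef, gamma_cinv, smul_neg, hv, neg_zero, gamma_zero]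
  obtain ⟨m, hm⟩ := HL j w z ⟨z, hz.symm⟩
  have hejc : e j • (B.circ (B.circ w z) (B.cinv w)) = B.circ (B.circ w z) (B.cinv w) := by
    rw [hm, smul_smul, hidem j]
  rw [conj_formula] at hm hejc
  -- compute e j • (w + γ_w z + γ_w (γ_z v))
  have h1 : e j • B.gamma w z = B.gamma w z := by
    rw [← hB, hz]
  have h2 : e j • B.gamma w (B.gamma z (B.cinv w)) = 0 := by
    rw [← hB, ← hB, hcw, hv, gamma_zero, gamma_zero]
  rw [smul_add, smul_add, hw, h1, h2, zero_add, add_zero] at hejc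
  -- hejc : γ_w z = w + γ_w z + γ_w (γ_z (cinv w))
  have h3 : B.gamma w (B.gamma z (B.cinv w)) = -w := by
    have := hejc.symm
    -- w + γ_w z + γ_w(γ_z v) = γ_w z
    linear_combination (norm := abel) this
  have h4 : B.gamma w (B.cinv w) = -w := gamma_cinv B w
  have := gamma_injective B w (h3.trans h4.symm)
  rwa [hcw] at this

/-- Step B: finite-support induction. -/
lemma stepB (hB : B.IsRBrace R) (hidem : ∀ i, e i * e i = e i)
    (horth : ∀ i j, i ≠ j → e i * e j = 0) (hone : ∑ i, e i = 1)
    (HL : ∀ (i : Fin t) (g x : N), (∃ m : N, x = e i • m) →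
        ∃ m : N, B.circ (B.circ g x) (B.cinv g) = e i • m)
    (i : Fin t) (z : N) (hz : e i • z = z) :
    ∀ S : Finset (Fin t), i ∉ S → ∀ w : N, (∀ k, k ∉ S → e k • w = 0) →
      B.gamma w z = z := by
  intro S
  induction S using Finset.induction_on with
  | empty =>
    intro _ w hw
    have hw0 : w = 0 := by
      rw [← sum_e_smul hone w]
      exact Finset.sum_eq_zero fun k _ => hw k (Finset.notMem_empty k)
    rw [hw0, zero_gamma]
  | @insert a s ha ih =>
    intro hi w hw
    have hia : i ≠ a := fun h => hi (by rw [h]; exact Finset.mem_insert_self a s)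
    have his : i ∉ s := fun h => hi (Finset.mem_insert_of_mem h)
    set u := e a • w with hu
    set v := w - u with hvdef
    have hv : ∀ k, k ∉ s → e k • v = 0 := by
      intro k hk
      by_cases hka : k = a
      · subst hka
        rw [hvdef, smul_sub, hu, smul_smul, hidem k, sub_self]
      · have hk' : k ∉ insert a s := by
          simp [Finset.mem_insert, hka, hk]
        rw [hvdef, smul_sub, hw k hk', hu, smul_smul, horth k a hka, zero_smul,
          sub_zero]
    set v' := B.gamma (B.cinv u) v with hv'def
    have hv' : ∀ k, k ∉ s → e k • v' = 0 := by
      intro k hk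
      rw [hv'def, ← hB, hv k hk, gamma_zero]
    have hw_eq : w = B.circ u v' := by
      rw [circ_eq_gamma, hv'def, gamma_right_inv, hvdef]
      abel
    have hua : e a • u = u := by rw [hu, smul_smul, hidem a]
    have hza : e a • z = 0 := by
      rw [← hz, smul_smul, horth a i (Ne.symm hia), zero_smul]
    rw [hw_eq, gamma_circ, ih his v' hv']
    exact stepA B hB hidem HL a u hua z hza

/-- Step C: the gamma action on the `i`-th component only depends on the
`i`-th component. -/
lemma stepC (hB : B.IsRBrace R) (hidem : ∀ i, e i * e i = e i)
    (horth : ∀ i j, i ≠ j → e i * e j = 0) (hone : ∑ i, e i = 1)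
    (HL : ∀ (i : Fin t) (g x : N), (∃ m : N, x = e i • m) →
        ∃ m : N, B.circ (B.circ g x) (B.cinv g) = e i • m)
    (i : Fin t) (z : N) (hz : e i • z = z) (g : N) :
    B.gamma g z = B.gamma (e i • g) z := by
  set u := e i • g with hu
  set w := g - u with hwdef
  set w' := B.gamma (B.cinv u) w with hw'def
  have hw' : ∀ k, k ∉ Finset.univ.erase i → e k • w' = 0 := by
    intro k hk
    have hki : k = i := by
      by_contra hne
      exact hk (Finset.mem_erase.mpr ⟨hne, Finset.mem_univ k⟩)
    subst hki
    rw [hw'def, ← hB, hwdef, smul_sub, hu, smul_smul, hidem k, sub_self,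
      gamma_zero]
  have hg_eq : g = B.circ u w' := by
    rw [circ_eq_gamma, hw'def, gamma_right_inv, hwdef]
    abel
  conv_lhs => rw [hg_eq]
  rw [gamma_circ, stepB B hB hidem horth hone HL i z hz (Finset.univ.erase i)
    (Finset.notMem_erase i Finset.univ) w' hw']

end Steps
end BraceAux

open BraceAux

/-- let R be a commutative ring which is the direct sum of
subrings R_i with units e_i (so the e_i are orthogonal idempotents summing
to 1), and let N be an R-module. Then N is the internal direct sum of the
submodules N_i = e_iN, each N_i is annihilated by R_j = e_jR for j ≠ i; if
moreover N is an R-brace then each N_i is a left ideal, and the N_i are all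
ideals iff the decomposition is a decomposition of braces, i.e. the gamma
function is computed componentwise. -/
theorem module_brace_splitting
    {R N : Type*} [CommRing R] [AddCommGroup N] [Module R N]
    (t : ℕ) (e : Fin t → R)
    (hidem : ∀ i, e i * e i = e i)
    (horth : ∀ i j, i ≠ j → e i * e j = 0)
    (hone : ∑ i, e i = 1)
    (B : BraceStruct N) (hB : B.IsRBrace R) :
    (∀ n : N, ∃! c : Fin t → N,
        (∀ i, ∃ m : N, c i = e i • m) ∧ n = ∑ i, c i) ∧
    (∀ i j, i ≠ j → ∀ (r : R) (m : N), (e j * r) • (e i • m) = 0) ∧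
    (∀ (i : Fin t) (g x : N), (∃ m : N, x = e i • m) →
        ∃ m : N, B.gamma g x = e i • m) ∧
    ((∀ (i : Fin t) (g x : N), (∃ m : N, x = e i • m) →
        ∃ m : N, B.circ (B.circ g x) (B.cinv g) = e i • m) ↔
      (∀ x y : N, B.gamma x y = ∑ i, B.gamma (e i • x) (e i • y))) := by
  classical
  refine ⟨?_, ?_, ?_, ?_⟩
  · -- internal direct sum decomposition
    intro n
    refine ⟨fun i => e i • n, ⟨fun i => ⟨n, rfl⟩, (sum_e_smul hone n).symm⟩, ?_⟩
    rintro c ⟨hc1, hc2⟩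
    funext i
    have : e i • n = c i := by
      rw [hc2, Finset.smul_sum, Finset.sum_eq_single i]
      · obtain ⟨m, hm⟩ := hc1 i
        rw [hm, smul_smul, hidem i]
      · intro j _ hji
        obtain ⟨m, hm⟩ := hc1 j
        rw [hm, smul_smul, horth i j (Ne.symm hji), zero_smul]
      · intro h
        exact absurd (Finset.mem_univ i) h
    exact this.symm
  · -- e_i N is annihilated by R_j, j ≠ i
    intro i j hij r m
    rw [smul_smul, mul_right_comm, horth j i (Ne.symm hij), zero_mul, zero_smul]
  · -- each N_i is a left ideal
    rintro i g x ⟨m, rfl⟩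
    exact ⟨B.gamma g m, hB g (e i) m⟩
  · constructor
    · -- ideals → componentwise gamma
      intro HL x y
      calc B.gamma x y = B.gamma x (∑ i, e i • y) := by rw [sum_e_smul hone]
        _ = ∑ i, B.gamma x (e i • y) := map_sum (gammaHom B x) _ _
        _ = ∑ i, B.gamma (e i • x) (e i • y) :=
            Finset.sum_congr rfl fun i _ =>
              stepC B hB hidem horth hone HL i (e i • y)
                (by rw [smul_smul, hidem i]) x
    · -- componentwise gamma → ideals
      intro H i g x hx
      obtain ⟨m, hm⟩ := hx
      have hxe : e i • x = x := by rw [hm, smul_smul, hidem i]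
      have hsum : B.gamma x (B.cinv g)
          = (B.gamma x (e i • B.cinv g) - e i • B.cinv g) + B.cinv g := by
        rw [H x (B.cinv g)]
        have hterm : ∀ j, B.gamma (e j • x) (e j • B.cinv g)
            = (if j = i then B.gamma x (e i • B.cinv g) - e i • B.cinv g else 0)
              + e j • B.cinv g := by
          intro j
          by_cases hj : j = i
          · subst hj
            rw [if_pos rfl, hxe]
            abel
          · rw [if_neg hj, hm, smul_smul, horth j i hj, zero_smul, zero_gamma,
              zero_add]
        rw [Finset.sum_congr rfl (fun j _ => hterm j), Finset.sum_add_distrib,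
          Finset.sum_ite_eq' Finset.univ i, sum_e_smul hone,
          if_pos (Finset.mem_univ i)]
      have harg : e i • (x + B.gamma x (B.cinv g) - B.cinv g)
          = x + B.gamma x (e i • B.cinv g) - e i • B.cinv g := by
        rw [smul_sub, smul_add, hxe, ← hB]
      refine ⟨B.gamma g (x + B.gamma x (B.cinv g) - B.cinv g), ?_⟩
      rw [conj_formula, ← hB, harg, hsum]
      simp only [gamma_add B, gamma_sub B, gamma_cinv B]
      abel
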